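/- The pointwise limit of the iterated-renormalization sequence of coherent weight functions exists and is itself a coherent weight function with h(root) = 1, and it assigns weight 0 exactly to the vertices that are eventually unsupported. -/
import Mathlib


/-- An abstract rooted tree: every vertex has a parent (the root is its own
parent), a depth (distance to the root), every vertex is connected to the
root, and each depth level is finite (finitely-branching). -/
structure RTree (V : Type) where
  root : V
  parent : V → V
  depth : V → ℕ
  parent_root : parent root = root
  depth_root : depth root = 0
  depth_parent : ∀ v : V, v ≠ root → depth (parent v) + 1 = depth v
  ancestor_root : ∀ v : V, parent^[depth v] v = root
  level_finite : ∀ d : ℕ, {v : V | depth v = d}.Finite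

namespace RTree

variable {V : Type}

/-- The children of a vertex. -/
def children (T : RTree V) (v : V) : Set V :=
  {u : V | T.parent u = v ∧ u ≠ T.root}

/-- The descendants of `v` that lie `e` levels below `v`. -/
def descAt (T : RTree V) (e : ℕ) (v : V) : Set V :=
  {u : V | T.parent^[e] u = v ∧ T.depth u = T.depth v + e}

end RTree

/-- A coherent weight function (a Hintikka tree): the root gets weight 1 and
the weight of each vertex is the sum of the weights of its children. -/
def Coherent {V : Type} (T : RTree V) (h : V → ℝ) : Prop :=
  h T.root = 1 ∧ ∀ v : V, h v = ∑ᶠ u ∈ T.children v, h u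
open scoped Classical

/-- `u` is an ancestor of (or equal to) `v`. -/
def AncOrEq {V : Type} (T : RTree V) (u v : V) : Prop :=
  ∃ k : ℕ, T.parent^[k] v = u ∧ T.depth v = T.depth u + k

/-- `u` is a proper descendant of `ρ`. -/
def ProperDesc {V : Type} (T : RTree V) (ρ u : V) : Prop :=
  ∃ j : ℕ, 0 < j ∧ T.parent^[j] u = ρ ∧ T.depth u = T.depth ρ + j

/-- `u` is supported (relative to weights `h`, target depth `D`, and the
refuted depth-`D` vertex `w`): there is a chain from `u` down to some
depth-`D` vertex `v ≠ w` along which `h` is positive (for vertices deeper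
than `D`, we require the ancestor at depth `D` to avoid `w` and to carry
positive weight). -/
def Supported {V : Type} (T : RTree V) (h : V → ℝ) (D : ℕ) (w : V) (u : V) : Prop :=
  if T.depth u ≤ D then
    ∃ v : V, T.depth v = D ∧ v ≠ w ∧ T.parent^[D - T.depth u] v = u ∧
      ∀ k : ℕ, k ≤ D - T.depth u → 0 < h (T.parent^[k] v)
  else
    T.parent^[T.depth u - D] u ≠ w ∧ 0 < h (T.parent^[T.depth u - D] u)

/-- The total renormalization constant: sum of `h` over the children of `ρ`. -/
noncomputable def Ztot {V : Type} (T : RTree V) (h : V → ℝ) (ρ : V) : ℝ :=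
  ∑ᶠ u ∈ T.children ρ, h u

/-- The positive renormalization constant: sum of `h` over the supported
children of `ρ`. -/
noncomputable def Zplus {V : Type} (T : RTree V) (h : V → ℝ) (D : ℕ) (w ρ : V) : ℝ :=
  ∑ᶠ u ∈ T.children ρ ∩ {u : V | Supported T h D w u}, h u

/-- Renormalization of `h` refuting the depth-`D` vertex `w`, with
redistribution point `ρ`: zero the unsupported descendants of `ρ`, rescale
the supported descendants of `ρ` by `Z/Z⁺`, and leave everything else
unchanged. -/
noncomputable def renorm {V : Type} (T : RTree V) (h : V → ℝ) (D : ℕ) (w ρ : V) : V → ℝ :=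
  fun u =>
    if ProperDesc T ρ u then
      if Supported T h D w u then (Ztot T h ρ / Zplus T h D w ρ) * h u else 0
    else h u

/-- `ρ` is the redistribution point for refuting the depth-`D` vertex `w`:
it is the deepest ancestor of `w` having a supported child. -/
def IsRedistPoint {V : Type} (T : RTree V) (h : V → ℝ) (D : ℕ) (w ρ : V) : Prop :=
  AncOrEq T ρ w ∧ (∃ c ∈ T.children ρ, Supported T h D w c) ∧
    ∀ u : V, AncOrEq T u w → T.depth ρ < T.depth u →
      ∀ c ∈ T.children u, ¬ Supported T h D w c

/-- The pointwise limit of the iterated-renormalization sequence of coherent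
weight functions exists and is itself a coherent weight function (in
particular assigning 1 to the root), and it assigns weight 0 exactly to the
vertices that are eventually unsupported. -/
theorem stmt9 {V : Type} (T : RTree V) (H : ℕ → V → ℝ)
    (hcoh : ∀ n : ℕ, Coherent T (H n)) (hnn : ∀ (n : ℕ) (v : V), 0 ≤ H n v)
    (hstep : ∀ n : ℕ, H (n + 1) = H n ∨
      ∃ (D : ℕ) (w ρ : V), T.depth w = D ∧ IsRedistPoint T (H n) D w ρ ∧
        0 < Zplus T (H n) D w ρ ∧ H (n + 1) = renorm T (H n) D w ρ) :
    ∃ Hlim : V → ℝ,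
      (∀ v : V, Filter.Tendsto (fun n : ℕ => H n v) Filter.atTop (nhds (Hlim v))) ∧
      Coherent T Hlim ∧
      ∀ v : V, (Hlim v = 0 ↔ ∃ E e : ℕ, ∀ u ∈ T.descAt e v, H E u = 0) := by
  
  classical
  -- children are finite and lie one level deeper
  have hchild_depth : ∀ v u : V, u ∈ T.children v → T.depth u = T.depth v + 1 := by
    intro v u hu
    have := T.depth_parent u hu.2
    rw [hu.1] at this
    omega
  have hchild_fin : ∀ v : V, (T.children v).Finite := by
    intro v
    exact (T.level_finite (T.depth v + 1)).subset (fun u hu => hchild_depth v u hu)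
  -- coherence as a Finset sum
  have hcoh' : ∀ n v, H n v = ∑ u ∈ (hchild_fin v).toFinset, H n u := by
    intro n v
    rw [(hcoh n).2 v, finsum_mem_eq_finite_toFinset_sum _ (hchild_fin v)]
  -- each vertex is bounded by its parent
  have hle_parent : ∀ n (v : V), v ≠ T.root → H n v ≤ H n (T.parent v) := by
    intro n v hv
    rw [hcoh' n (T.parent v)]
    refine Finset.single_le_sum (f := fun u => H n u) (fun u _ => hnn n u) ?_
    simp only [Set.Finite.mem_toFinset]
    exact ⟨rfl, hv⟩
  have hle_iter : ∀ n (v : V) (k : ℕ), H n v ≤ H n (T.parent^[k] v) := by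
    intro n v k
    induction k with
    | zero => simp
    | succ k ih =>
      rw [Function.iterate_succ_apply']
      by_cases hk : T.parent^[k] v = T.root
      · rw [hk, T.parent_root, ← hk]; exact ih
      · exact ih.trans (hle_parent n _ hk)
  have hbd : ∀ n v, H n v ≤ 1 := by
    intro n v
    have := hle_iter n v (T.depth v)
    rwa [T.ancestor_root, (hcoh n).1] at this
  -- the one-step behaviour
  have hstep' : ∀ n (v : V), (H n v ≤ H (n + 1) v ∧ (H n v = 0 → H (n + 1) v = 0))
      ∨ H (n + 1) v = 0 := by
    intro n v
    rcases hstep n with heq | ⟨D, w, ρ, _, _, hZp, heq⟩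
    · left; rw [heq]; exact ⟨le_rfl, fun h => h⟩
    · rw [heq]; unfold renorm
      by_cases hpd : ProperDesc T ρ v
      · by_cases hsup : Supported T (H n) D w v
        · left
          simp only [hpd, hsup, if_true]
          have hfin1 : (T.children ρ ∩ {u : V | Supported T (H n) D w u}).Finite :=
            (hchild_fin ρ).subset Set.inter_subset_left
          have hZle : Zplus T (H n) D w ρ ≤ Ztot T (H n) ρ := by
            unfold Zplus Ztot
            rw [finsum_mem_eq_finite_toFinset_sum _ hfin1,
              finsum_mem_eq_finite_toFinset_sum _ (hchild_fin ρ)]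
            refine Finset.sum_le_sum_of_subset_of_nonneg ?_ (fun u _ _ => hnn n u)
            rw [Set.Finite.toFinset_subset_toFinset]
            exact Set.inter_subset_left
          have hfac : 1 ≤ Ztot T (H n) ρ / Zplus T (H n) D w ρ :=
            (one_le_div hZp).mpr hZle
          constructor
          · calc H n v = 1 * H n v := (one_mul _).symm
              _ ≤ (Ztot T (H n) ρ / Zplus T (H n) D w ρ) * H n v :=
                mul_le_mul_of_nonneg_right hfac (hnn n v)
          · intro h; rw [h, mul_zero]
        · right; simp [hpd, hsup]
      · left; simp only [hpd, if_false]; exact ⟨le_rfl, fun h => h⟩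
  have hzero : ∀ n (v : V), H n v = 0 → H (n + 1) v = 0 := by
    intro n v h
    rcases hstep' n v with ⟨_, h2⟩ | h2
    · exact h2 h
    · exact h2
  have hzero' : ∀ n (v : V), H n v = 0 → ∀ m, n ≤ m → H m v = 0 := by
    intro n v h m hm
    induction m, hm using Nat.le_induction with
    | base => exact h
    | succ m _ ih => exact hzero m v ih
  -- convergence with zero characterization
  have hconv : ∀ v : V, ∃ L : ℝ,
      Filter.Tendsto (fun n : ℕ => H n v) Filter.atTop (nhds L) ∧
      (L = 0 ↔ ∃ n, H n v = 0) := by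
    intro v
    by_cases hz : ∃ n, H n v = 0
    · obtain ⟨n, hn⟩ := hz
      refine ⟨0, ?_, by simp [hn]; exact ⟨n, hn⟩⟩
      refine Filter.Tendsto.congr' ?_ tendsto_const_nhds
      filter_upwards [Filter.eventually_atTop.mpr ⟨n, fun m hm => hzero' n v hn m hm⟩]
        with m hm using hm.symm
    · have hpos : ∀ n, 0 < H n v := by
        intro n
        rcases lt_or_eq_of_le (hnn n v) with h | h
        · exact h
        · exact absurd ⟨n, h.symm⟩ hz
      have hmono : Monotone fun n => H n v := by
        refine monotone_nat_of_le_succ fun n => ?_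
        rcases hstep' n v with ⟨h1, _⟩ | h1
        · exact h1
        · exact absurd h1 (ne_of_gt (hpos (n + 1)))
      have hbdd : BddAbove (Set.range fun n => H n v) :=
        ⟨1, by rintro x ⟨n, rfl⟩; exact hbd n v⟩
      refine ⟨⨆ n, H n v, tendsto_atTop_ciSup hmono hbdd, ?_⟩
      have : 0 < ⨆ n, H n v := lt_of_lt_of_le (hpos 0) (le_ciSup hbdd 0)
      simp only [ne_of_gt this, false_iff]
      exact hz
  choose Hlim htend hiff using hconv
  refine ⟨Hlim, htend, ⟨?_, ?_⟩, ?_⟩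
  · -- Hlim root = 1
    have h1 : Filter.Tendsto (fun n : ℕ => H n T.root) Filter.atTop (nhds 1) := by
      have : (fun n : ℕ => H n T.root) = fun _ => (1 : ℝ) := by
        funext n; exact (hcoh n).1
      rw [this]; exact tendsto_const_nhds
    exact tendsto_nhds_unique (htend T.root) h1
  · -- Hlim v = sum over children
    intro v
    have h1 : Filter.Tendsto (fun n : ℕ => ∑ u ∈ (hchild_fin v).toFinset, H n u)
        Filter.atTop (nhds (∑ u ∈ (hchild_fin v).toFinset, Hlim u)) :=
      tendsto_finset_sum _ fun u _ => htend u
    have h2 : (fun n : ℕ => ∑ u ∈ (hchild_fin v).toFinset, H n u)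
        = fun n : ℕ => H n v := by
      funext n; exact (hcoh' n v).symm
    rw [h2] at h1
    rw [tendsto_nhds_unique (htend v) h1,
      finsum_mem_eq_finite_toFinset_sum _ (hchild_fin v)]
  · -- zero characterization
    intro v
    rw [hiff v]
    constructor
    · rintro ⟨n, hn⟩
      refine ⟨n, 0, fun u hu => ?_⟩
      have hu1 : u = v := hu.1
      rw [hu1]; exact hn
    · rintro ⟨E, e, h0⟩
      refine ⟨E, ?_⟩
      induction e generalizing v with
      | zero => exact h0 v ⟨rfl, rfl⟩
      | succ e ih =>
        refine ih v fun u hu => ?_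
        rw [(hcoh E).2 u]
        refine finsum_mem_eq_zero_of_forall_eq_zero fun c hc => ?_
        refine h0 c ⟨?_, ?_⟩
        · rw [Function.iterate_succ_apply, hc.1, hu.1]
        · rw [hchild_depth u c hc, hu.2]; ring
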